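/- (Affection Principle.) Let Γ = (Ĝ, S) be a finite connected loose graph, let xy be an edge of Ĝ with both endpoints x, y ∈ S, and let (Ĝ', S) be the resolution of Γ along xy. Let k be any field and let S₀ be any nonempty subset of S. Then the coordinate inclusion ι : ℙ(k^{V(Ĝ)}) → ℙ(k^{V(Ĝ')}) restricts to a bijection from (⋂_{s ∈ S₀} A_s^{Ĝ}(k)) ∖ P_{x,y}(k) onto (⋂_{s ∈ S₀} A_s^{Ĝ'}(k)) ∖ P'_{x,y}(k). In particular, the intersection ⋂_{s ∈ S₀} A_s of local affine charts changes under resolving the edge xy only inside the projective subspace P_{x,y} generated by the closed balls of radius 1 around x and y. -/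

import Mathlib

/-- The local affine chart `A_v^H(k)` of the vertex `v` of the graph `H`. -/
def looseChart {V : Type} (H : SimpleGraph V) (k : Type) [Field k] (v : V) :
    Set (Projectivization k (V → k)) :=
  {p | (∀ w, w ∉ insert v (H.neighborSet v) → p.rep w = 0) ∧ p.rep v ≠ 0}

/-- The closed ball of radius 1 around `u` in the graph `H`. -/
def closedBall {V : Type} (H : SimpleGraph V) (u : V) : Set V :=
  insert u (H.neighborSet u)

/-- The projective subspace `P_{x,y}(k)` generated by the closed balls of
radius 1 around `x` and `y`. -/
def ballSpace {V : Type} (H : SimpleGraph V) (k : Type) [Field k] (x y : V) :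
    Set (Projectivization k (V → k)) :=
  {p | ∀ w, w ∉ closedBall H x ∪ closedBall H y → p.rep w = 0}

/-- The completion `Ĝ'` of the resolution of the loose graph `(Ĝ, S)` along the
edge `xy`: the edge `xy` is deleted and two new pendant vertices `x̃ = inr false`
and `ỹ = inr true` are attached to `x` and `y` respectively. -/
def resGraph {V : Type} (G : SimpleGraph V) (x y : V) : SimpleGraph (V ⊕ Bool) where
  Adj a b :=
    match a, b with
    | Sum.inl a, Sum.inl b => G.Adj a b ∧ ¬((a = x ∧ b = y) ∨ (a = y ∧ b = x))
    | Sum.inl a, Sum.inr c => (c = false ∧ a = x) ∨ (c = true ∧ a = y)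
    | Sum.inr c, Sum.inl a => (c = false ∧ a = x) ∨ (c = true ∧ a = y)
    | Sum.inr _, Sum.inr _ => False
  symm := by
    constructor
    rintro (a | c) (b | d) h
    · exact ⟨h.1.symm, fun hc => h.2 (by tauto)⟩
    · exact h
    · exact h
    · exact h
  loopless := by
    constructor
    rintro (a | c) h
    · exact G.irrefl h.1
    · exact h

/-- Extension by zero, as a linear map `k^V → k^{V ⊕ Bool}`. -/
def extByZero (k : Type) [Field k] {V : Type} : (V → k) →ₗ[k] (V ⊕ Bool → k) where
  toFun f := Sum.elim f 0
  map_add' f g := by funext w; cases w <;> simp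
  map_smul' c f := by funext w; cases w <;> simp

theorem extByZero_injective (k : Type) [Field k] {V : Type} :
    Function.Injective (extByZero k (V := V)) := by
  intro f g h
  funext v
  exact congrFun h (Sum.inl v)

lemma rep_eq_zero_iff {k V : Type} [Field k] (f : V → k) (hf : f ≠ 0) (w : V) :
    (Projectivization.mk k f hf).rep w = 0 ↔ f w = 0 := by
  obtain ⟨a, ha⟩ := Projectivization.exists_smul_eq_mk_rep k f hf
  rw [← ha]
  simp [Units.smul_def, Units.ne_zero]

lemma mem_closedBall_iff {V : Type} (H : SimpleGraph V) (u w : V) :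
    w ∈ closedBall H u ↔ w = u ∨ H.Adj u w := by
  simp [closedBall]

lemma resGraph_adj_inl_inl {V : Type} (G : SimpleGraph V) (x y a b : V) :
    (resGraph G x y).Adj (Sum.inl a) (Sum.inl b) ↔
      G.Adj a b ∧ ¬((a = x ∧ b = y) ∨ (a = y ∧ b = x)) := Iff.rfl

lemma resGraph_adj_inl_inr {V : Type} (G : SimpleGraph V) (x y a : V) (c : Bool) :
    (resGraph G x y).Adj (Sum.inl a) (Sum.inr c) ↔
      (c = false ∧ a = x) ∨ (c = true ∧ a = y) := Iff.rfl

lemma mem_diff_iff {V : Type} (H : SimpleGraph V) (k : Type) [Field k]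
    (S₀ : Finset V) (x y : V) (f : V → k) (hf : f ≠ 0) :
    Projectivization.mk k f hf ∈
        ((⋂ s ∈ S₀, looseChart H k s) \ ballSpace H k x y) ↔
      (∀ s ∈ S₀, (∀ w, w ∉ closedBall H s → f w = 0) ∧ f s ≠ 0) ∧
        ∃ w, w ∉ closedBall H x ∪ closedBall H y ∧ f w ≠ 0 := by
  simp only [Set.mem_diff, Set.mem_iInter, looseChart, ballSpace, Set.mem_setOf_eq,
    ne_eq, rep_eq_zero_iff, closedBall]
  push_neg
  tauto

lemma mem_diff_iff' {V : Type} (H : SimpleGraph (V ⊕ Bool)) (k : Type) [Field k]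
    (S₀ : Finset V) (x y : V ⊕ Bool) (f : V ⊕ Bool → k) (hf : f ≠ 0) :
    Projectivization.mk k f hf ∈
        ((⋂ s ∈ S₀, looseChart H k (Sum.inl s)) \ ballSpace H k x y) ↔
      (∀ s ∈ S₀, (∀ w, w ∉ closedBall H (Sum.inl s) → f w = 0) ∧ f (Sum.inl s) ≠ 0) ∧
        ∃ w, w ∉ closedBall H x ∪ closedBall H y ∧ f w ≠ 0 := by
  simp only [Set.mem_diff, Set.mem_iInter, looseChart, ballSpace, Set.mem_setOf_eq,
    ne_eq, rep_eq_zero_iff, closedBall]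
  push_neg
  tauto

/-- **Affection Principle.** Let `Γ = (Ĝ, S)` be a finite connected loose
graph, `xy` an edge with `x, y ∈ S`, and `(Ĝ', S)` the resolution of `Γ` along
`xy`. For any field `k` and any nonempty `S₀ ⊆ S`, the coordinate inclusion
`ι : ℙ(k^{V(Ĝ)}) → ℙ(k^{V(Ĝ')})` restricts to a bijection from
`(⋂_{s ∈ S₀} A_s^{Ĝ}(k)) ∖ P_{x,y}(k)` onto
`(⋂_{s ∈ S₀} A_s^{Ĝ'}(k)) ∖ P'_{x,y}(k)`: the intersection of local charts
changes under resolution only inside `P_{x,y}`. -/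
theorem affection_principle {V : Type} [Fintype V]
    (G : SimpleGraph V) [DecidableRel G.Adj] (S : Finset V)
    (hconn : G.Connected)
    (hS1 : ∀ v ∉ S, G.degree v = 1)
    (hS2 : ∀ a b, G.Adj a b → a ∈ S ∨ b ∈ S)
    (x y : V) (hxy : G.Adj x y) (hx : x ∈ S) (hy : y ∈ S)
    (S₀ : Finset V) (hS₀ : S₀ ⊆ S) (hS₀ne : S₀.Nonempty)
    (k : Type) [Field k] :
    Set.BijOn (Projectivization.map (extByZero k (V := V)) (extByZero_injective k))
      ((⋂ s ∈ S₀, looseChart G k s) \ ballSpace G k x y)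
      ((⋂ s ∈ S₀, looseChart (resGraph G x y) k (Sum.inl s)) \
        ballSpace (resGraph G x y) k (Sum.inl x) (Sum.inl y)) := by
  have hxyne : x ≠ y := hxy.ne
  refine ⟨?_, ?_, ?_⟩
  · -- MapsTo
    intro p hp
    induction p using Projectivization.ind with
    | h f hf =>
    rw [Projectivization.map_mk]
    rw [mem_diff_iff] at hp
    obtain ⟨hL1, w₀, hw₀, hfw₀⟩ := hp
    have hsne : ∀ s ∈ S₀, s ≠ x ∧ s ≠ y := by
      intro s hs
      constructor <;> rintro rfl
      · exact hfw₀ ((hL1 _ hs).1 w₀ fun h => hw₀ (Or.inl h))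
      · exact hfw₀ ((hL1 _ hs).1 w₀ fun h => hw₀ (Or.inr h))
    rw [mem_diff_iff']
    constructor
    · intro s hs
      obtain ⟨hsx, hsy⟩ := hsne s hs
      refine ⟨?_, (hL1 s hs).2⟩
      rintro (u | c) hu
      · refine (hL1 s hs).1 u fun h => hu ?_
        rw [mem_closedBall_iff] at h ⊢
        rcases h with rfl | h
        · exact Or.inl rfl
        · exact Or.inr ⟨h, by rintro (⟨rfl, _⟩ | ⟨rfl, _⟩) <;> simp_all⟩
      · rfl
    · refine ⟨Sum.inl w₀, ?_, hfw₀⟩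
      rintro (h | h) <;> rw [mem_closedBall_iff] at h <;>
        rcases h with h | h
      · exact hw₀ (Or.inl ((mem_closedBall_iff G x w₀).2 (Or.inl (Sum.inl.injEq .. ▸ h))))
      · exact hw₀ (Or.inl ((mem_closedBall_iff G x w₀).2 (Or.inr h.1)))
      · exact hw₀ (Or.inr ((mem_closedBall_iff G y w₀).2 (Or.inl (Sum.inl.injEq .. ▸ h))))
      · exact hw₀ (Or.inr ((mem_closedBall_iff G y w₀).2 (Or.inr h.1)))
  · -- InjOn
    exact (Projectivization.map_injective (extByZero k (V := V))
      (extByZero_injective k)).injOn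
  · -- SurjOn
    intro q hq
    induction q using Projectivization.ind with
    | h g hg =>
    rw [mem_diff_iff'] at hq
    obtain ⟨hR1, w₀', hw₀', hgw⟩ := hq
    have hsne : ∀ s ∈ S₀, s ≠ x ∧ s ≠ y := by
      intro s hs
      constructor <;> rintro rfl
      · exact hgw ((hR1 _ hs).1 w₀' fun h => hw₀' (Or.inl h))
      · exact hgw ((hR1 _ hs).1 w₀' fun h => hw₀' (Or.inr h))
    obtain ⟨s₁, hs₁⟩ := hS₀ne
    obtain ⟨hs₁x, hs₁y⟩ := hsne s₁ hs₁
    have hinr : ∀ c : Bool, g (Sum.inr c) = 0 := by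
      intro c
      refine (hR1 s₁ hs₁).1 (Sum.inr c) fun h => ?_
      rw [mem_closedBall_iff] at h
      rcases h with h | h
      · cases h
      · rcases (resGraph_adj_inl_inr G x y s₁ c).1 h with ⟨_, h⟩ | ⟨_, h⟩ <;> simp_all
    set f : V → k := fun u => g (Sum.inl u) with hfdef
    have hgf : extByZero k f = g := by
      funext w
      cases w with
      | inl u => rfl
      | inr c => exact (hinr c).symm
    have hf : f ≠ 0 := by
      intro h0
      apply hg
      rw [← hgf, h0]
      funext w; cases w <;> rfl
    refine ⟨Projectivization.mk k f hf, ?_, ?_⟩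
    · rw [mem_diff_iff]
      constructor
      · intro s hs
        obtain ⟨hsx, hsy⟩ := hsne s hs
        refine ⟨?_, (hR1 s hs).2⟩
        intro u hu
        refine (hR1 s hs).1 (Sum.inl u) fun h => hu ?_
        rw [mem_closedBall_iff] at h ⊢
        rcases h with h | h
        · exact Or.inl (Sum.inl.injEq .. ▸ h)
        · exact Or.inr h.1
      · obtain (w₀ | c) := w₀'
        · refine ⟨w₀, ?_, hgw⟩
          rintro (h | h) <;> rw [mem_closedBall_iff] at h
          · rcases h with rfl | h
            · exact hw₀' (Or.inl ((mem_closedBall_iff _ _ _).2 (Or.inl rfl)))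
            · by_cases hwy : w₀ = y
              · subst hwy
                exact hw₀' (Or.inr ((mem_closedBall_iff _ _ _).2 (Or.inl rfl)))
              · exact hw₀' (Or.inl ((mem_closedBall_iff _ _ _).2 (Or.inr
                  ⟨h, by rintro (⟨_, h'⟩ | ⟨h', _⟩) <;> simp_all⟩)))
          · rcases h with rfl | h
            · exact hw₀' (Or.inr ((mem_closedBall_iff _ _ _).2 (Or.inl rfl)))
            · by_cases hwx : w₀ = x
              · subst hwx
                exact hw₀' (Or.inl ((mem_closedBall_iff _ _ _).2 (Or.inl rfl)))
              · exact hw₀' (Or.inr ((mem_closedBall_iff _ _ _).2 (Or.inr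
                  ⟨h, by rintro (⟨h', _⟩ | ⟨_, h'⟩) <;> simp_all⟩)))
        · exact absurd (hinr c) hgw
    · rw [Projectivization.map_mk]
      exact (Projectivization.mk_eq_mk_iff k _ _ _ hg).2 ⟨1, by rw [one_smul, hgf]⟩
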